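/- Let f = ∑_{i=1}^m f_i where each f_i : ℝ^n → ℝ is quasi-convex and continuous, X ⊆ ℝ^n nonempty closed convex, and suppose the component functions have a common minimizer over X (Assumption 1) and each f_i satisfies the Hölder condition of order p with modulus L_i ≤ L_max on X (Assumption 2). Let {x_k} be generated by the incremental subgradient method (Algorithm 1) with stepsizes v_k > 0. Then for any common minimizer x* and any k, ‖x_{k+1} - x*‖² ≤ ‖x_k - x*‖² - 2 v_k C_{p,m} (f(x_k) - f*)^{1/p} + m² v_k², where C_{p,m} = L_max^{-1/p} · min{1, (2m)^{1-1/p}} and f* = min_{x∈X} f(x). -/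

import Mathlib

open Finset
open scoped NNReal

/-- Subadditivity of `x ^ q` for `0 ≤ q ≤ 1` over a pair. -/
lemma stmt8_rpow_add_le {x y q : ℝ} (hx : 0 ≤ x) (hy : 0 ≤ y) (hq0 : 0 ≤ q) (hq1 : q ≤ 1) :
    (x + y) ^ q ≤ x ^ q + y ^ q := by
  have h := NNReal.rpow_add_le_add_rpow x.toNNReal y.toNNReal hq0 hq1
  have h' : (((x.toNNReal + y.toNNReal) ^ q : ℝ≥0) : ℝ)
      ≤ ((x.toNNReal ^ q + y.toNNReal ^ q : ℝ≥0) : ℝ) := by exact_mod_cast h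
  rw [NNReal.coe_add, NNReal.coe_rpow, NNReal.coe_rpow, NNReal.coe_rpow, NNReal.coe_add,
    Real.coe_toNNReal _ hx, Real.coe_toNNReal _ hy] at h'
  exact h'

/-- Subadditivity of `x ^ q` for `0 < q ≤ 1` over a finite sum. -/
lemma stmt8_rpow_sum_le {q : ℝ} (hq0 : 0 < q) (hq1 : q ≤ 1) (s : Finset ℕ) (a : ℕ → ℝ)
    (ha : ∀ i, 0 ≤ a i) : (∑ i ∈ s, a i) ^ q ≤ ∑ i ∈ s, (a i) ^ q := by
  classical
  induction s using Finset.induction with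
  | empty => simp [Real.zero_rpow hq0.ne']
  | insert b s hnot ih =>
    rw [Finset.sum_insert hnot, Finset.sum_insert hnot]
    calc (a b + ∑ i ∈ s, a i) ^ q ≤ (a b) ^ q + (∑ i ∈ s, a i) ^ q :=
          stmt8_rpow_add_le (ha b) (Finset.sum_nonneg fun i _ => ha i) hq0.le hq1
      _ ≤ (a b) ^ q + ∑ i ∈ s, (a i) ^ q := by linarith [ih]

/-- Power-mean inequality: `(∑ a)^q ≤ m^(q-1) * ∑ a^q` for `q ≥ 1`. -/
lemma stmt8_sum_rpow_ge {q : ℝ} (hq1 : 1 ≤ q) (m : ℕ) (hm : 0 < m) (a : ℕ → ℝ)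
    (ha : ∀ i, 0 ≤ a i) :
    (∑ i ∈ range m, a i) ^ q ≤ (m : ℝ) ^ (q - 1) * ∑ i ∈ range m, (a i) ^ q := by
  have hmR : (0:ℝ) < m := by exact_mod_cast hm
  have h := Real.rpow_arith_mean_le_arith_mean_rpow (range m) (fun _ => 1 / (m:ℝ)) a
    (fun i _ => by positivity) (by simp [Finset.sum_const]; field_simp) (fun i _ => ha i) hq1
  have e1 : ∑ i ∈ range m, (1 / (m:ℝ)) * a i = (1 / (m:ℝ)) * ∑ i ∈ range m, a i := by
    rw [Finset.mul_sum]
  have e2 : ∑ i ∈ range m, (1 / (m:ℝ)) * (a i) ^ q = (1 / (m:ℝ)) * ∑ i ∈ range m, (a i) ^ q := by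
    rw [Finset.mul_sum]
  rw [e1, e2] at h
  have hS : 0 ≤ ∑ i ∈ range m, a i := Finset.sum_nonneg fun i _ => ha i
  have hmul : ((1 / (m:ℝ)) * ∑ i ∈ range m, a i) ^ q
      = (1 / (m:ℝ)) ^ q * (∑ i ∈ range m, a i) ^ q :=
    Real.mul_rpow (by positivity) hS
  rw [hmul] at h
  have hiq : (0:ℝ) < (1 / (m:ℝ)) ^ q := Real.rpow_pos_of_pos (by positivity) q
  have key : (∑ i ∈ range m, a i) ^ q ≤ ((1/(m:ℝ)) / (1/(m:ℝ))^q) * ∑ i ∈ range m, (a i) ^ q := by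
    rw [div_mul_eq_mul_div, le_div_iff₀ hiq, mul_comm]
    exact h
  have hconst : ((1/(m:ℝ)) / (1/(m:ℝ))^q) = (m:ℝ) ^ (q - 1) := by
    rw [one_div, Real.inv_rpow hmR.le, Real.rpow_sub hmR, Real.rpow_one]
    field_simp
  rwa [hconst] at key

open Finset

/-- The core scalar estimate. -/
lemma stmt8_core (m : ℕ) (hm : 0 < m) {p L vk : ℝ} (hp : 0 < p) (hL : 0 < L) (hvk : 0 ≤ vk)
    (d : ℕ → ℝ) (hd : ∀ i, 0 ≤ d i) (S : ℝ) (hS : 0 ≤ S)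
    (hSle : S ≤ (∑ i ∈ range m, d i) + L * vk ^ p * ∑ i ∈ range m, (i:ℝ) ^ p) :
    min 1 ((2*(m:ℝ)) ^ (1 - 1/p)) * S ^ (1/p)
      ≤ (∑ i ∈ range m, (d i) ^ (1/p)) + L ^ (1/p) * (((m:ℝ)^2 - m)/2) * vk := by
  set q := 1/p with hqdef
  have hq : 0 < q := by positivity
  have hmR : (0:ℝ) < m := by exact_mod_cast hm
  have hpq : p * q = 1 := by rw [hqdef, mul_one_div_cancel hp.ne']
  -- Gauss sum
  have hA : ∑ i ∈ range m, (i:ℝ) = ((m:ℝ)^2 - m)/2 := by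
    have h2 : ((∑ i ∈ range m, i) * 2 : ℕ) = m * (m - 1) := Finset.sum_range_id_mul_two m
    have h2R := congrArg (Nat.cast : ℕ → ℝ) h2
    push_cast [Nat.cast_sub hm] at h2R
    nlinarith [h2R]
  have hD : 0 ≤ ∑ i ∈ range m, d i := Finset.sum_nonneg fun i _ => hd i
  have hW : 0 ≤ ∑ i ∈ range m, (i:ℝ) ^ p := Finset.sum_nonneg fun i _ => Real.rpow_nonneg (by positivity) p
  have hvkp : 0 ≤ vk ^ p := Real.rpow_nonneg hvk p
  have hT : 0 ≤ L * vk ^ p * ∑ i ∈ range m, (i:ℝ) ^ p := by positivity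
  -- algebra for T^q
  have hTq : (L * vk ^ p * ∑ i ∈ range m, (i:ℝ) ^ p) ^ q
      = L ^ q * vk * (∑ i ∈ range m, (i:ℝ) ^ p) ^ q := by
    rw [Real.mul_rpow (by positivity) hW, Real.mul_rpow hL.le hvkp, ← Real.rpow_mul hvk, hpq,
      Real.rpow_one]
  have hipq : ∀ i : ℕ, ((i:ℝ) ^ p) ^ q = (i : ℝ) := by
    intro i
    rw [← Real.rpow_mul (by positivity), hpq, Real.rpow_one]
  have hLq : 0 ≤ L ^ q := Real.rpow_nonneg hL.le q
  rcases le_or_gt 1 p with hp1 | hp1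
  · -- case p ≥ 1, q ≤ 1
    have hq1 : q ≤ 1 := by
      rw [hqdef]; rw [div_le_one hp]; linarith
    have hmin : min 1 ((2*(m:ℝ)) ^ (1 - q)) ≤ 1 := min_le_left _ _
    have hSq : 0 ≤ S ^ q := Real.rpow_nonneg hS q
    have step1 : S ^ q ≤ ((∑ i ∈ range m, d i) + L * vk ^ p * ∑ i ∈ range m, (i:ℝ) ^ p) ^ q :=
      Real.rpow_le_rpow hS hSle hq.le
    have step2 : ((∑ i ∈ range m, d i) + L * vk ^ p * ∑ i ∈ range m, (i:ℝ) ^ p) ^ q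
        ≤ (∑ i ∈ range m, d i) ^ q + (L * vk ^ p * ∑ i ∈ range m, (i:ℝ) ^ p) ^ q :=
      stmt8_rpow_add_le hD hT hq.le hq1
    have step3 : (∑ i ∈ range m, d i) ^ q ≤ ∑ i ∈ range m, (d i) ^ q :=
      stmt8_rpow_sum_le hq hq1 _ _ hd
    have step4 : (∑ i ∈ range m, (i:ℝ) ^ p) ^ q ≤ ∑ i ∈ range m, (i:ℝ) := by
      calc (∑ i ∈ range m, (i:ℝ) ^ p) ^ q ≤ ∑ i ∈ range m, ((i:ℝ) ^ p) ^ q :=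
            stmt8_rpow_sum_le hq hq1 _ _ (fun i => Real.rpow_nonneg (by positivity) p)
        _ = ∑ i ∈ range m, (i:ℝ) := by simp only [hipq]
    have step5 : (L * vk ^ p * ∑ i ∈ range m, (i:ℝ) ^ p) ^ q
        ≤ L ^ q * (((m:ℝ)^2 - m)/2) * vk := by
      rw [hTq]
      have := mul_le_mul_of_nonneg_left step4 (by positivity : (0:ℝ) ≤ L ^ q * vk)
      calc L ^ q * vk * (∑ i ∈ range m, (i:ℝ) ^ p) ^ q
          = L ^ q * vk * (∑ i ∈ range m, (i:ℝ) ^ p) ^ q := rfl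
        _ ≤ L ^ q * vk * (((m:ℝ)^2 - m)/2) := by
            rw [mul_assoc, mul_assoc] at this ⊢
            exact mul_le_mul_of_nonneg_left (mul_le_mul_of_nonneg_left (by rw [← hA]; exact step4) hvk) hLq
        _ = L ^ q * (((m:ℝ)^2 - m)/2) * vk := by ring
    calc min 1 ((2*(m:ℝ)) ^ (1 - q)) * S ^ q ≤ 1 * S ^ q :=
          mul_le_mul_of_nonneg_right hmin hSq
      _ = S ^ q := one_mul _
      _ ≤ (∑ i ∈ range m, (d i) ^ q) + L ^ q * (((m:ℝ)^2 - m)/2) * vk := by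
          linarith [step1, step2, step3, step5]
  · -- case p < 1, q > 1
    have hq1 : 1 ≤ q := by
      rw [hqdef, le_div_iff₀ hp]; linarith
    have hm1 : (1:ℝ) ≤ (m:ℝ) := by exact_mod_cast hm
    have h2m : (1:ℝ) ≤ 2 * m := by linarith
    have hminle : min 1 ((2*(m:ℝ)) ^ (1 - q)) ≤ (2*(m:ℝ)) ^ (1 - q) := min_le_right _ _
    have hminnn : 0 ≤ min 1 ((2*(m:ℝ)) ^ (1 - q)) :=
      le_min zero_le_one (Real.rpow_nonneg (by positivity) _)
    have h2mq : (2*(m:ℝ)) ^ (1 - q) = 2 ^ (1-q) * (m:ℝ) ^ (1-q) := Real.mul_rpow (by norm_num) hmR.le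
    -- two-term power mean: (a+b)^q ≤ 2^(q-1) (a^q + b^q)
    have two_term : ∀ a b : ℝ, 0 ≤ a → 0 ≤ b → (a + b) ^ q ≤ 2 ^ (q-1) * (a ^ q + b ^ q) := by
      intro a b ha hb
      have h := stmt8_sum_rpow_ge hq1 2 (by norm_num) (fun i => if i = 0 then a else b)
        (fun i => by split <;> assumption)
      simpa [Finset.sum_range_succ] using h
    have hDq := stmt8_sum_rpow_ge hq1 m hm d hd
    have hWq : (∑ i ∈ range m, (i:ℝ) ^ p) ^ q ≤ (m:ℝ) ^ (q-1) * ∑ i ∈ range m, (i:ℝ) := by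
      have h := stmt8_sum_rpow_ge hq1 m hm (fun i => (i:ℝ) ^ p)
        (fun i => Real.rpow_nonneg (by positivity) p)
      simpa only [hipq] using h
    have hmq : (m:ℝ) ^ (1-q) * (m:ℝ) ^ (q-1) = 1 := by
      rw [← Real.rpow_add hmR]; norm_num
    have h2q : (2:ℝ) ^ (1-q) * (2:ℝ) ^ (q-1) = 1 := by
      rw [← Real.rpow_add (by norm_num)]; norm_num
    have hSq' : S ^ q ≤ ((∑ i ∈ range m, d i) + L * vk ^ p * ∑ i ∈ range m, (i:ℝ) ^ p) ^ q :=
      Real.rpow_le_rpow hS hSle hq.le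
    set D := ∑ i ∈ range m, d i with hDdef
    set T := L * vk ^ p * ∑ i ∈ range m, (i:ℝ) ^ p with hTdef
    have hTqle : T ^ q ≤ L ^ q * vk * ((m:ℝ) ^ (q-1) * ∑ i ∈ range m, (i:ℝ)) := by
      rw [hTq]
      exact mul_le_mul_of_nonneg_left hWq (by positivity)
    have hm1q : 0 ≤ (m:ℝ) ^ (1-q) := Real.rpow_nonneg hmR.le _
    calc min 1 ((2*(m:ℝ)) ^ (1 - q)) * S ^ q
        ≤ (2*(m:ℝ)) ^ (1-q) * S ^ q :=
          mul_le_mul_of_nonneg_right hminle (Real.rpow_nonneg hS q)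
      _ ≤ (2*(m:ℝ)) ^ (1-q) * ((D + T) ^ q) :=
          mul_le_mul_of_nonneg_left hSq' (Real.rpow_nonneg (by positivity) _)
      _ ≤ (2*(m:ℝ)) ^ (1-q) * (2 ^ (q-1) * (D ^ q + T ^ q)) :=
          mul_le_mul_of_nonneg_left (two_term D T hD hT) (Real.rpow_nonneg (by positivity) _)
      _ = (m:ℝ) ^ (1-q) * (D ^ q + T ^ q) := by
          rw [h2mq]
          calc 2 ^ (1-q) * (m:ℝ) ^ (1-q) * (2 ^ (q-1) * (D ^ q + T ^ q))
              = (2 ^ (1-q) * 2 ^ (q-1)) * ((m:ℝ) ^ (1-q) * (D ^ q + T ^ q)) := by ring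
            _ = (m:ℝ) ^ (1-q) * (D ^ q + T ^ q) := by rw [h2q, one_mul]
      _ ≤ (m:ℝ) ^ (1-q) * (((m:ℝ) ^ (q-1) * ∑ i ∈ range m, (d i) ^ q)
            + L ^ q * vk * ((m:ℝ) ^ (q-1) * ∑ i ∈ range m, (i:ℝ))) :=
          mul_le_mul_of_nonneg_left (add_le_add hDq hTqle) hm1q
      _ = ((m:ℝ) ^ (1-q) * (m:ℝ) ^ (q-1)) * (∑ i ∈ range m, (d i) ^ q)
            + ((m:ℝ) ^ (1-q) * (m:ℝ) ^ (q-1)) * (L ^ q * vk * ∑ i ∈ range m, (i:ℝ)) := by ring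
      _ = (∑ i ∈ range m, (d i) ^ q) + L ^ q * (((m:ℝ)^2 - m)/2) * vk := by
          rw [hmq, one_mul, one_mul, hA]; ring


open RealInnerProductSpace

variable {E : Type*} [NormedAddCommGroup E] [InnerProductSpace ℝ E]

/-- Nonexpansiveness of the metric projection onto a convex set. -/
lemma stmt8_proj_nonexp {X : Set E} (hXconv : Convex ℝ X)
    (proj : E → E) (hproj : ∀ y, proj y ∈ X ∧ ∀ w ∈ X, ‖proj y - y‖ ≤ ‖w - y‖) :
    ∀ y, ∀ w ∈ X, ‖proj y - w‖ ≤ ‖y - w‖ := by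
  intro y w hw
  haveI : Nonempty X := ⟨⟨proj y, (hproj y).1⟩⟩
  have hbdd : BddBelow (Set.range fun w : X => ‖y - (w:E)‖) :=
    ⟨0, fun _ ⟨i, hi⟩ => hi ▸ norm_nonneg _⟩
  have hinf : ‖y - proj y‖ = ⨅ w : X, ‖y - (w:E)‖ := by
    apply le_antisymm
    · apply le_ciInf
      intro w'
      rw [norm_sub_rev y (proj y), norm_sub_rev y (w' : E)]
      exact (hproj y).2 w' w'.2
    · exact ciInf_le hbdd ⟨proj y, (hproj y).1⟩
  have vi := (norm_eq_iInf_iff_real_inner_le_zero hXconv (hproj y).1).1 hinf w hw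
  -- vi : ⟪y - proj y, w - proj y⟫ ≤ 0
  have expand : ‖y - w‖ ^ 2
      = ‖y - proj y‖ ^ 2 + 2 * ⟪y - proj y, proj y - w⟫ + ‖proj y - w‖ ^ 2 := by
    have : y - w = (y - proj y) + (proj y - w) := by abel
    rw [this, norm_add_sq_real]
  have hip : 0 ≤ ⟪y - proj y, proj y - w⟫ := by
    have : ⟪y - proj y, proj y - w⟫ = - ⟪y - proj y, w - proj y⟫ := by
      rw [← inner_neg_right]; congr 1; abel
    rw [this]; linarith
  have hsq : ‖proj y - w‖ ^ 2 ≤ ‖y - w‖ ^ 2 := by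
    nlinarith [sq_nonneg ‖y - proj y‖]
  nlinarith [norm_nonneg (proj y - w), norm_nonneg (y - w)]

/-- Lower bound on the inner product with a unit quasi-subgradient. -/
lemma stmt8_quasigrad (p L : ℝ) (hp : 0 < p) (hL : 0 < L) (φ : E → ℝ) (zz xs : E)
    (hH : ∀ y, |φ y - φ xs| ≤ L * ‖y - xs‖ ^ p)
    (hlt : φ xs < φ zz) (g : E) (hg : ‖g‖ = 1)
    (hqs : ∀ y, φ y < φ zz → ⟪g, y - zz⟫ ≤ 0) :
    ((φ zz - φ xs) / L) ^ (1/p) ≤ ⟪g, zz - xs⟫ := by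
  set r := ((φ zz - φ xs) / L) ^ (1/p) with hrdef
  set A := ⟪g, zz - xs⟫ with hAdef
  have hA0 : 0 ≤ A := by
    have h := hqs xs hlt
    have : ⟪g, xs - zz⟫ = -A := by rw [hAdef, ← inner_neg_right]; congr 1; abel
    rw [this] at h; linarith
  have hrp : r ^ p = (φ zz - φ xs) / L := by
    rw [hrdef, ← Real.rpow_mul (div_nonneg (by linarith) hL.le),
      one_div, inv_mul_cancel₀ hp.ne', Real.rpow_one]
  apply le_of_forall_sub_le
  intro ε hε
  rcases le_or_gt (r - ε) 0 with h0 | h0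
  · linarith
  · set t := r - ε with htdef
    have htr : t < r := by linarith
    have hy : φ (xs + t • g) < φ zz := by
      have hnorm : ‖(xs + t • g) - xs‖ = t := by
        rw [add_sub_cancel_left, norm_smul, hg, mul_one, Real.norm_eq_abs, abs_of_pos h0]
      have h1 := hH (xs + t • g)
      rw [hnorm] at h1
      have h2 : t ^ p < r ^ p := Real.rpow_lt_rpow h0.le htr hp
      rw [hrp] at h2
      have h3 : L * t ^ p < φ zz - φ xs := by
        rw [lt_div_iff₀ hL] at h2
        linarith
      have := (abs_le.1 h1).2
      linarith
    have h4 := hqs (xs + t • g) hy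
    have h5 : ⟪g, (xs + t • g) - zz⟫ = t - A := by
      have : (xs + t • g) - zz = t • g - (zz - xs) := by abel
      rw [this, inner_sub_right, inner_smul_right, real_inner_self_eq_norm_sq, hg]
      rw [hAdef]; ring
    rw [h5] at h4
    linarith


open RealInnerProductSpace Finset

/-- Basic inequality for the incremental subgradient method (Lemma 3.1). -/
theorem stmt8 {n m : ℕ} (hm : 0 < m)
    (f : Fin m → EuclideanSpace ℝ (Fin n) → ℝ)
    (X : Set (EuclideanSpace ℝ (Fin n))) (hXne : X.Nonempty)
    (hXc : IsClosed X) (hXconv : Convex ℝ X)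
    (hqc : ∀ i, QuasiconvexOn ℝ Set.univ (f i)) (hcont : ∀ i, Continuous (f i))
    (p Lmax : ℝ) (hp : 0 < p) (hL : 0 < Lmax)
    -- Hölder condition of order p with moduli ≤ Lmax on X (Assumption 2)
    (hHolder : ∀ i, ∀ x ∈ X, ∀ y, |f i y - f i x| ≤ Lmax * ‖y - x‖ ^ p)
    -- common minimizer of all components over X (Assumption 1)
    (xstar : EuclideanSpace ℝ (Fin n)) (hxsX : xstar ∈ X)
    (hmin : ∀ i, ∀ y ∈ X, f i xstar ≤ f i y)
    -- projection onto X
    (proj : EuclideanSpace ℝ (Fin n) → EuclideanSpace ℝ (Fin n))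
    (hproj : ∀ y, proj y ∈ X ∧ ∀ w ∈ X, ‖proj y - y‖ ≤ ‖w - y‖)
    -- stepsizes
    (v : ℕ → ℝ) (hv : ∀ k, 0 < v k)
    -- the iterates of Algorithm 1
    (x : ℕ → EuclideanSpace ℝ (Fin n)) (z : ℕ → ℕ → EuclideanSpace ℝ (Fin n))
    (hx0 : x 0 ∈ X)
    (hz0 : ∀ k, z k 0 = x k)
    (hstep : ∀ k, ∀ i : Fin m,
      (f i (z k i) = f i xstar ∧ z k ((i : ℕ) + 1) = z k i) ∨
      (f i xstar < f i (z k i) ∧ ∃ g : EuclideanSpace ℝ (Fin n), ‖g‖ = 1 ∧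
        (∀ y, f i y < f i (z k i) → (inner ℝ g (y - z k i) : ℝ) ≤ 0) ∧
        z k ((i : ℕ) + 1) = proj (z k i - v k • g)))
    (hxsucc : ∀ k, x (k + 1) = z k m) :
    ∀ k, ‖x (k + 1) - xstar‖ ^ 2 ≤ ‖x k - xstar‖ ^ 2
      - 2 * v k * (Lmax ^ (-(1 / p)) * min 1 ((2 * (m : ℝ)) ^ (1 - 1 / p)))
          * ((∑ i, f i (x k)) - ∑ i, f i xstar) ^ (1 / p)
      + (m : ℝ) ^ 2 * v k ^ 2 := by
  have hne := stmt8_proj_nonexp hXconv proj hproj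
  have hzX : ∀ j, x j ∈ X → ∀ i, i ≤ m → z j i ∈ X := by
    intro j hxj i
    induction i with
    | zero => intro _; rw [hz0]; exact hxj
    | succ i ih =>
      intro hi1
      have him : i < m := hi1
      rcases hstep j ⟨i, him⟩ with ⟨_, hz⟩ | ⟨_, g, _, _, hz⟩
      · simp only [Fin.val_mk] at hz
        rw [hz]; exact ih (Nat.le_of_succ_le hi1)
      · simp only [Fin.val_mk] at hz
        rw [hz]; exact (hproj _).1
  have hxX : ∀ j, x j ∈ X := by
    intro j
    induction j with
    | zero => exact hx0
    | succ j ih => rw [hxsucc]; exact hzX j ih m le_rfl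
  intro k
  have hvk := hv k
  have hzkX : ∀ i, i ≤ m → z k i ∈ X := hzX k (hxX k)
  set d : ℕ → ℝ := fun i => if h : i < m then f ⟨i,h⟩ (z k i) - f ⟨i,h⟩ xstar else 0 with hddef
  have hd0 : ∀ i, 0 ≤ d i := by
    intro i
    rw [hddef]; dsimp only; split
    · next h => exact sub_nonneg.2 (hmin ⟨i,h⟩ _ (hzkX i h.le))
    · exact le_refl 0
  -- per-step estimate
  have hstep' : ∀ i, i < m →
      ‖z k (i+1) - xstar‖^2 ≤ ‖z k i - xstar‖^2 - 2*(v k)*((d i)/Lmax)^(1/p) + (v k)^2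
      ∧ ‖z k (i+1) - z k i‖ ≤ v k := by
    intro i him
    have hdi : d i = f ⟨i,him⟩ (z k i) - f ⟨i,him⟩ xstar := dif_pos him
    rcases hstep k ⟨i, him⟩ with ⟨heq, hz⟩ | ⟨hlt, g, hg1, hqs, hz⟩
    · simp only [Fin.val_mk] at heq hz
      have hd00 : d i = 0 := by rw [hdi, heq, sub_self]
      constructor
      · rw [hd00, zero_div, Real.zero_rpow (one_div_ne_zero hp.ne'), hz]
        nlinarith [sq_nonneg (v k)]
      · rw [hz]; simp [hvk.le]
    · simp only [Fin.val_mk] at hlt hqs hz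
      have hib : ((d i)/Lmax)^(1/p) ≤ ⟪g, z k i - xstar⟫ := by
        rw [hdi]
        exact stmt8_quasigrad p Lmax hp hL (f ⟨i,him⟩) (z k i) xstar
          (fun y => hHolder ⟨i,him⟩ xstar hxsX y) hlt g hg1 hqs
      constructor
      · have h1 : ‖z k (i+1) - xstar‖ ≤ ‖(z k i - v k • g) - xstar‖ := by
          rw [hz]; exact hne _ _ hxsX
        have h2 : ‖(z k i - v k • g) - xstar‖^2
            = ‖z k i - xstar‖^2 - 2*(v k)*⟪g, z k i - xstar⟫ + (v k)^2 := by
          have e : (z k i - v k • g) - xstar = (z k i - xstar) - v k • g := by abel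
          rw [e, norm_sub_sq_real, real_inner_smul_right, real_inner_comm, norm_smul, hg1,
            Real.norm_eq_abs, abs_of_pos hvk]
          ring
        have sqle : ‖z k (i+1) - xstar‖^2 ≤ ‖(z k i - v k • g) - xstar‖^2 :=
          pow_le_pow_left₀ (norm_nonneg _) h1 2
        rw [h2] at sqle
        have hmul : 2*(v k)*((d i)/Lmax)^(1/p) ≤ 2*(v k)*⟪g, z k i - xstar⟫ :=
          mul_le_mul_of_nonneg_left hib (by positivity)
        linarith
      · rw [hz]
        calc ‖proj (z k i - v k • g) - z k i‖ ≤ ‖(z k i - v k • g) - z k i‖ :=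
              hne _ _ (hzkX i him.le)
          _ = ‖v k • g‖ := by rw [sub_sub_cancel_left, norm_neg]
          _ = v k := by rw [norm_smul, hg1, Real.norm_eq_abs, abs_of_pos hvk, mul_one]
  -- telescoping
  have tele : ∀ j, j ≤ m →
      ‖z k j - xstar‖^2 ≤ ‖x k - xstar‖^2
        - 2*(v k)*(∑ i ∈ range j, ((d i)/Lmax)^(1/p)) + j*(v k)^2
      ∧ ‖z k j - x k‖ ≤ j * v k := by
    intro j
    induction j with
    | zero => intro _; rw [hz0]; simp
    | succ j ih =>
      intro hj1
      obtain ⟨ihA, ihB⟩ := ih (Nat.le_of_succ_le hj1)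
      obtain ⟨hA, hB⟩ := hstep' j hj1
      constructor
      · rw [Finset.sum_range_succ]
        push_cast
        linarith
      · calc ‖z k (j+1) - x k‖ ≤ ‖z k (j+1) - z k j‖ + ‖z k j - x k‖ :=
              norm_sub_le_norm_sub_add_norm_sub _ _ _
          _ ≤ v k + j * v k := add_le_add hB ihB
          _ = ((j+1 : ℕ) : ℝ) * v k := by push_cast; ring
  have final1 : ‖x (k+1) - xstar‖^2 ≤ ‖x k - xstar‖^2
      - 2*(v k)*(∑ i ∈ range m, ((d i)/Lmax)^(1/p)) + m*(v k)^2 := by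
    rw [hxsucc]; exact (tele m le_rfl).1
  -- relate f i (x k) to d i through drift
  set s : ℕ → ℝ := fun i => if h : i < m then f ⟨i,h⟩ (x k) - f ⟨i,h⟩ xstar else 0 with hsdef
  have hs0 : ∀ i, 0 ≤ s i := by
    intro i
    rw [hsdef]; dsimp only; split
    · next h => exact sub_nonneg.2 (hmin ⟨i,h⟩ _ (hxX k))
    · exact le_refl 0
  have hsle : ∀ i ∈ range m, s i ≤ d i + Lmax * ((v k)^p * (i:ℝ)^p) := by
    intro i hi
    have him : i < m := Finset.mem_range.1 hi
    have hdrift : ‖z k i - x k‖ ≤ i * v k := (tele i him.le).2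
    have hH := hHolder ⟨i,him⟩ (x k) (hxX k) (z k i)
    have hnp : ‖z k i - x k‖ ^ p ≤ ((i:ℝ) * v k) ^ p :=
      Real.rpow_le_rpow (norm_nonneg _) hdrift hp.le
    have hmulp : ((i:ℝ) * v k) ^ p = (i:ℝ)^p * (v k)^p :=
      Real.mul_rpow (by positivity) hvk.le
    have habs := (abs_le.1 hH).1
    rw [hsdef, hddef]; dsimp only; rw [dif_pos him, dif_pos him]
    have hLnn : (0:ℝ) ≤ Lmax := hL.le
    have hLmul := mul_le_mul_of_nonneg_left hnp hLnn
    rw [hmulp] at hLmul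
    nlinarith [hLmul, habs]
  have hSsum : (∑ i, f i (x k)) - ∑ i, f i xstar = ∑ i ∈ range m, s i := by
    rw [← Finset.sum_sub_distrib, ← Fin.sum_univ_eq_sum_range s m]
    apply Finset.sum_congr rfl
    intro i _
    rw [hsdef]; dsimp only; rw [dif_pos i.isLt]
  have hSnn : 0 ≤ ∑ i ∈ range m, s i := Finset.sum_nonneg fun i _ => hs0 i
  have hSle' : (∑ i ∈ range m, s i)
      ≤ (∑ i ∈ range m, d i) + Lmax * (v k)^p * ∑ i ∈ range m, (i:ℝ)^p := by
    calc (∑ i ∈ range m, s i) ≤ ∑ i ∈ range m, (d i + Lmax * ((v k)^p * (i:ℝ)^p)) :=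
          Finset.sum_le_sum hsle
      _ = (∑ i ∈ range m, d i) + Lmax * (v k)^p * ∑ i ∈ range m, (i:ℝ)^p := by
          rw [Finset.sum_add_distrib]
          congr 1
          rw [mul_assoc, Finset.mul_sum, Finset.mul_sum]
  have hcore := stmt8_core m hm hp hL hvk.le d hd0 _ hSnn hSle'
  -- combine
  have hLq : (0:ℝ) < Lmax ^ (1/p) := Real.rpow_pos_of_pos hL _
  have hdivsum : ∑ i ∈ range m, ((d i)/Lmax)^(1/p)
      = (∑ i ∈ range m, (d i)^(1/p)) / Lmax ^ (1/p) := by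
    rw [Finset.sum_div]
    apply Finset.sum_congr rfl
    intro i _
    exact Real.div_rpow (hd0 i) hL.le _
  have hnegq : Lmax ^ (-(1/p)) = (Lmax ^ (1/p))⁻¹ := Real.rpow_neg hL.le _
  rw [hSsum, hnegq]
  have claim : 2 * v k * ((Lmax ^ (1/p))⁻¹ * min 1 ((2*(m:ℝ)) ^ (1 - 1/p)))
        * (∑ i ∈ range m, s i) ^ (1/p)
      ≤ 2 * v k * (∑ i ∈ range m, ((d i)/Lmax)^(1/p)) + ((m:ℝ)^2 - m) * (v k)^2 := by
    have h1 := mul_le_mul_of_nonneg_left hcore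
      (by positivity : (0:ℝ) ≤ 2 * v k * (Lmax ^ (1/p))⁻¹)
    calc 2 * v k * ((Lmax ^ (1/p))⁻¹ * min 1 ((2*(m:ℝ)) ^ (1 - 1/p)))
          * (∑ i ∈ range m, s i) ^ (1/p)
        = (2 * v k * (Lmax ^ (1/p))⁻¹)
            * (min 1 ((2*(m:ℝ)) ^ (1 - 1/p)) * (∑ i ∈ range m, s i) ^ (1/p)) := by ring
      _ ≤ (2 * v k * (Lmax ^ (1/p))⁻¹)
            * ((∑ i ∈ range m, (d i)^(1/p)) + Lmax^(1/p) * (((m:ℝ)^2 - m)/2) * v k) := h1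
      _ = 2 * v k * ((∑ i ∈ range m, (d i)^(1/p)) / Lmax ^ (1/p))
            + (Lmax^(1/p) * (Lmax^(1/p))⁻¹) * (((m:ℝ)^2 - m)) * (v k)^2 := by ring
      _ = 2 * v k * (∑ i ∈ range m, ((d i)/Lmax)^(1/p)) + ((m:ℝ)^2 - m) * (v k)^2 := by
          rw [hdivsum, mul_inv_cancel₀ hLq.ne']
          ring
  have hmm : (m:ℝ) * (v k)^2 + ((m:ℝ)^2 - m) * (v k)^2 = (m:ℝ)^2 * (v k)^2 := by ring
  linarith
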